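/- Let X ⊆ ℝ^d be finite nonempty, M a positive integer and δ > 0. Let s₁,…,s_M be drawn independently and uniformly at random (with replacement) from X and set μS = (1/M)·Σ_{i=1}^M s_i. Then Pr[ Φ({μS},X) ≤ (1 + 1/(δM))·Δ₁(X) ] ≥ 1 − δ. -/

import Mathlib

open Finset
open scoped BigOperators
open Classical

noncomputable section

/-- Points of `ℝ^d`. -/
abbrev Pt (d : ℕ) := EuclideanSpace ℝ (Fin d)

/-- `Φ(C, X) = Σ_{x ∈ X} min_{c ∈ C} ‖x - c‖²`. -/
noncomputable def Phi {d : ℕ} (C X : Finset (Pt d)) : ℝ :=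
  ∑ x ∈ X, sInf ((fun c => ‖x - c‖ ^ 2) '' (C : Set (Pt d)))

/-- The centroid `μ(X)` of a finite set of points. -/
noncomputable def ctr {d : ℕ} (X : Finset (Pt d)) : Pt d :=
  (X.card : ℝ)⁻¹ • ∑ x ∈ X, x

/-- `Δ₁(X) = Φ({μ(X)}, X)`. -/
noncomputable def Delta1 {d : ℕ} (X : Finset (Pt d)) : ℝ := Phi {ctr X} X

/-- `Δ_k(X)`: the optimal `k`-means cost of `X`. -/
noncomputable def DeltaK {d : ℕ} (k : ℕ) (X : Finset (Pt d)) : ℝ :=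
  sInf ((fun C => Phi C X) '' {C : Finset (Pt d) | C.card = k})

/-- `X₁, …, X_k` is an optimal `k`-means partition of `X`. -/
def IsOptPartition {d : ℕ} (k : ℕ) (X : Finset (Pt d)) (Xs : Fin k → Finset (Pt d)) : Prop :=
  (∀ j, (Xs j).Nonempty) ∧
  (∀ j l, j ≠ l → Disjoint (Xs j) (Xs l)) ∧
  Finset.univ.biUnion Xs = X ∧
  ∑ j, Delta1 (Xs j) = DeltaK k X

/-- `X` is `(k, ε)`-irreducible: `Δ_{k-1}(X) ≥ (1+ε)·Δ_k(X)`. -/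
def KIrreducible {d : ℕ} (k : ℕ) (ε : ℝ) (X : Finset (Pt d)) : Prop :=
  (1 + ε) * DeltaK k X ≤ DeltaK (k - 1) X

/-- The invariant `P(i)`: `Ci` consists of the centers `c r` for `r < i` (clusters reindexed
so that the covered clusters come first), each `c r` is a `(1 + ε/16)`-good center for the
optimal cluster `Xs r`, and `Φ(Ci, X) > 0`. -/
def InvariantP {d k : ℕ} (ε : ℝ) (X : Finset (Pt d)) (Xs : Fin k → Finset (Pt d))
    (i : ℕ) (c : Fin k → Pt d) (Ci : Finset (Pt d)) : Prop :=
  Ci = Finset.image c (Finset.univ.filter (fun r : Fin k => r.val < i)) ∧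
  (∀ r : Fin k, r.val < i → Phi {c r} (Xs r) ≤ (1 + ε / 16) * Delta1 (Xs r)) ∧
  0 < Phi Ci X

lemma Phi_singleton {d : ℕ} (c : Pt d) (X : Finset (Pt d)) :
    Phi {c} X = ∑ x ∈ X, ‖x - c‖ ^ 2 := by
  unfold Phi
  refine Finset.sum_congr rfl fun x _ => ?_
  simp

lemma sum_sub_ctr {d : ℕ} {X : Finset (Pt d)} (hX : X.Nonempty) :
    ∑ x ∈ X, (x - ctr X) = 0 := by
  have hc : (X.card : ℝ) ≠ 0 := Nat.cast_ne_zero.mpr (Finset.card_ne_zero.mpr hX)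
  rw [Finset.sum_sub_distrib, Finset.sum_const, ← Nat.cast_smul_eq_nsmul ℝ]
  unfold ctr
  rw [smul_smul, mul_inv_cancel₀ hc, one_smul, sub_self]

lemma Phi_singleton_eq {d : ℕ} {X : Finset (Pt d)} (hX : X.Nonempty) (c : Pt d) :
    Phi {c} X = Delta1 X + (X.card : ℝ) * ‖c - ctr X‖ ^ 2 := by
  have hD : Delta1 X = ∑ x ∈ X, ‖x - ctr X‖ ^ 2 := by rw [Delta1, Phi_singleton]
  rw [Phi_singleton, hD]
  have key : ∀ x ∈ X, ‖x - c‖ ^ 2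
      = ‖x - ctr X‖ ^ 2 + 2 * (inner ℝ (x - ctr X) (ctr X - c) : ℝ) + ‖ctr X - c‖ ^ 2 := by
    intro x _
    rw [← norm_add_sq_real, sub_add_sub_cancel]
  rw [Finset.sum_congr rfl key]
  rw [Finset.sum_add_distrib, Finset.sum_add_distrib, Finset.sum_const,
    nsmul_eq_mul]
  have hcross : ∑ x ∈ X, 2 * (inner ℝ (x - ctr X) (ctr X - c) : ℝ) = 0 := by
    rw [← Finset.mul_sum, ← sum_inner, sum_sub_ctr hX, inner_zero_left, mul_zero]
  rw [hcross, add_zero, norm_sub_rev]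

lemma sum_norm_sq_pi {d : ℕ} {α : Type*} [Fintype α] (g : α → Pt d)
    (hg : ∑ x : α, g x = 0) (M : ℕ) :
    ∑ s : Fin (M + 1) → α, ‖∑ i, g (s i)‖ ^ 2
      = (M + 1 : ℝ) * (Fintype.card α : ℝ) ^ M * ∑ x : α, ‖g x‖ ^ 2 := by
  induction M with
  | zero =>
    rw [← Equiv.sum_comp (Equiv.funUnique (Fin 1) α).symm
      (fun s => ‖∑ i, g (s i)‖ ^ 2)]
    simp [Fin.sum_univ_one]
  | succ M ih =>
    rw [← Equiv.sum_comp (Fin.consEquiv (fun _ : Fin (M + 2) => α))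
      (fun s => ‖∑ i, g (s i)‖ ^ 2), Fintype.sum_prod_type]
    have hterm : ∀ (x : α) (t : Fin (M + 1) → α),
        ‖∑ i : Fin (M + 2), g ((Fin.cons x t : ∀ _ : Fin (M + 2), α) i)‖ ^ 2
          = ‖g x‖ ^ 2 + 2 * (inner ℝ (g x) (∑ i, g (t i)) : ℝ)
            + ‖∑ i, g (t i)‖ ^ 2 := by
      intro x t
      rw [Fin.sum_univ_succ]
      simp only [Fin.cons_zero, Fin.cons_succ]
      rw [norm_add_sq_real]
    simp only [Fin.consEquiv_apply, hterm]
    simp only [Finset.sum_add_distrib]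
    have hcard : (Finset.univ : Finset (Fin (M + 1) → α)).card
        = Fintype.card α ^ (M + 1) := by
      rw [Finset.card_univ, Fintype.card_fun, Fintype.card_fin]
    have h1 : ∑ x : α, ∑ _t : Fin (M + 1) → α, ‖g x‖ ^ 2
        = ((Fintype.card α : ℝ)) ^ (M + 1) * ∑ x : α, ‖g x‖ ^ 2 := by
      simp only [Finset.sum_const, hcard, nsmul_eq_mul, Nat.cast_pow]
      rw [Finset.mul_sum]
    have h2 : ∑ x : α, ∑ t : Fin (M + 1) → α,
        2 * (inner ℝ (g x) (∑ i, g (t i)) : ℝ) = 0 := by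
      have : ∀ x : α, ∑ t : Fin (M + 1) → α, 2 * (inner ℝ (g x) (∑ i, g (t i)) : ℝ)
          = 2 * (inner ℝ (g x) (∑ t : Fin (M + 1) → α, ∑ i, g (t i)) : ℝ) := by
        intro x
        rw [inner_sum, Finset.mul_sum]
      rw [Finset.sum_congr rfl (fun x _ => this x), ← Finset.mul_sum, ← sum_inner, hg,
        inner_zero_left, mul_zero]
    have h3 : ∑ _x : α, ∑ t : Fin (M + 1) → α, ‖∑ i, g (t i)‖ ^ 2
        = (Fintype.card α : ℝ) * ((M + 1 : ℝ) * (Fintype.card α : ℝ) ^ M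
            * ∑ x : α, ‖g x‖ ^ 2) := by
      rw [Finset.sum_const, Finset.card_univ, ih, nsmul_eq_mul]
    rw [h1, h2, h3]
    push_cast
    ring


/-- **Inaba et al..** Let `s₁, …, s_M` be drawn independently and uniformly
(with replacement) from the finite nonempty set `X ⊆ ℝ^d`, and let
`μS = (1/M)·Σᵢ sᵢ`. Then `Pr[Φ({μS}, X) ≤ (1 + 1/(δM))·Δ₁(X)] ≥ 1 − δ`.
The probability of an event `E ⊆ (Fin M → X)` is `Σ_{s ∈ E} (1/|X|)^M`. -/
theorem stmt_3 {d : ℕ} (X : Finset (Pt d)) (hX : X.Nonempty) (M : ℕ) (hM : 0 < M)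
    (δ : ℝ) (hδ : 0 < δ) :
    1 - δ ≤
      ∑ s ∈ (Finset.univ : Finset (Fin M → {x // x ∈ X})).filter
          (fun s => Phi {(M : ℝ)⁻¹ • ∑ i, (s i : Pt d)} X ≤ (1 + 1 / (δ * M)) * Delta1 X),
        ((X.card : ℝ))⁻¹ ^ M := by
  obtain ⟨M', rfl⟩ := Nat.exists_eq_succ_of_ne_zero hM.ne'
  set M := M' + 1 with hMdef
  have hMR : (0:ℝ) < M := by positivity
  have hn : 0 < X.card := Finset.card_pos.mpr hX
  have hnR : (0:ℝ) < X.card := by exact_mod_cast hn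
  set μ : Pt d := ctr X with hμ
  set g : {x // x ∈ X} → Pt d := fun x => (x : Pt d) - μ with hgdef
  have hg : ∑ x : {x // x ∈ X}, g x = 0 := by
    rw [hgdef]
    rw [Finset.sum_coe_sort X (fun x => x - μ)]
    exact sum_sub_ctr hX
  set V : ℝ := ∑ x ∈ X, ‖x - μ‖ ^ 2 with hVdef
  have hVnn : 0 ≤ V := Finset.sum_nonneg fun x _ => by positivity
  have hD1 : Delta1 X = V := by rw [Delta1, Phi_singleton]
  set q : (Fin M → {x // x ∈ X}) → ℝ :=
    fun s => (X.card : ℝ) * ‖((M:ℝ)⁻¹ • ∑ i, (s i : Pt d)) - μ‖ ^ 2 with hqdef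
  have hqnn : ∀ s, 0 ≤ q s := fun s => by positivity
  have hPhi : ∀ s : Fin M → {x // x ∈ X},
      Phi {(M : ℝ)⁻¹ • ∑ i, (s i : Pt d)} X = Delta1 X + q s :=
    fun s => Phi_singleton_eq hX _
  have hdev : ∀ s : Fin M → {x // x ∈ X},
      ((M:ℝ)⁻¹ • ∑ i, (s i : Pt d)) - μ = (M:ℝ)⁻¹ • ∑ i, g (s i) := by
    intro s
    have h1 : ∑ i, g (s i) = (∑ i, (s i : Pt d)) - M • μ := by
      rw [hgdef]
      rw [Finset.sum_sub_distrib, Finset.sum_const, Finset.card_univ, Fintype.card_fin]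
    rw [h1, smul_sub, ← Nat.cast_smul_eq_nsmul ℝ, smul_smul,
      inv_mul_cancel₀ hMR.ne', one_smul]
  have hqeq : ∀ s, q s = (X.card : ℝ) * ((M:ℝ)⁻¹)^2 * ‖∑ i, g (s i)‖^2 := by
    intro s
    rw [hqdef]
    simp only
    rw [hdev s, norm_smul, Real.norm_eq_abs, abs_of_pos (by positivity), mul_pow, mul_assoc]
  have hVα : ∑ x : {x // x ∈ X}, ‖g x‖ ^ 2 = V := by
    rw [hgdef, hVdef]
    exact Finset.sum_coe_sort X (fun x => ‖x - μ‖ ^ 2)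
  have hsum_q : ∑ s : Fin M → {x // x ∈ X}, q s = (X.card:ℝ)^M * V / M := by
    rw [Finset.sum_congr rfl (fun s _ => hqeq s), ← Finset.mul_sum,
      sum_norm_sq_pi g hg M', Fintype.card_coe, hVα]
    have : ((M:ℕ):ℝ) = (M':ℝ) + 1 := by norm_num [hMdef]
    rw [this]
    have hM1 : (0:ℝ) < (M':ℝ) + 1 := by positivity
    field_simp
    ring
  set p : ℝ := ((X.card : ℝ))⁻¹ ^ M with hpdef
  have hppos : 0 < p := by positivity
  have hpn : (X.card:ℝ)^M * p = 1 := by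
    rw [hpdef, ← mul_pow, mul_inv_cancel₀ hnR.ne', one_pow]
  set cond : (Fin M → {x // x ∈ X}) → Prop :=
    fun s => Phi {(M : ℝ)⁻¹ • ∑ i, (s i : Pt d)} X ≤ (1 + 1 / (δ * M)) * Delta1 X with hcond
  set A := (Finset.univ : Finset (Fin M → {x // x ∈ X})).filter cond with hA
  set B := (Finset.univ : Finset (Fin M → {x // x ∈ X})).filter (fun s => ¬ cond s) with hB
  have hsplit : ∑ s ∈ A, p + ∑ s ∈ B, p = 1 := by
    rw [hA, hB, Finset.sum_filter_add_sum_filter_not, Finset.sum_const,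
      Finset.card_univ, Fintype.card_fun, Fintype.card_coe, Fintype.card_fin,
      nsmul_eq_mul, Nat.cast_pow]
    exact hpn
  have hτ : ∀ s ∈ B, V / (δ * M) < q s := by
    intro s hs
    rw [hB, Finset.mem_filter] at hs
    have h2 := hs.2
    rw [hcond] at h2
    simp only [not_le] at h2
    rw [hPhi s, hD1] at h2
    have hexp : (1 + 1 / (δ * (M:ℝ))) * V = V + V / (δ * M) := by ring
    linarith [h2, hexp.symm.le]
  have hBq : (B.card : ℝ) * (V / (δ * M)) ≤ (X.card:ℝ)^M * V / M := by
    have h1 : (B.card : ℝ) * (V / (δ * M)) ≤ ∑ s ∈ B, q s := by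
      have := Finset.card_nsmul_le_sum B q (V / (δ * M)) (fun s hs => (hτ s hs).le)
      rwa [nsmul_eq_mul] at this
    have h2 : ∑ s ∈ B, q s ≤ ∑ s : Fin M → {x // x ∈ X}, q s :=
      Finset.sum_le_sum_of_subset_of_nonneg (Finset.filter_subset _ _)
        (fun s _ _ => hqnn s)
    rw [hsum_q] at h2
    linarith
  have hBsum : ∑ s ∈ B, p ≤ δ := by
    rw [Finset.sum_const, nsmul_eq_mul]
    rcases eq_or_lt_of_le hVnn with hV0 | hVpos
    · -- V = 0 : B is empty
      have hq0 : ∀ s, q s = 0 := by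
        intro s
        have h0 : ∑ s : Fin M → {x // x ∈ X}, q s = 0 := by
          rw [hsum_q, ← hV0]; ring
        exact (Finset.sum_eq_zero_iff_of_nonneg (fun s _ => hqnn s)).mp h0 s
          (Finset.mem_univ s)
      have : B = ∅ := by
        rw [Finset.eq_empty_iff_forall_notMem]
        intro s hs
        have := hτ s hs
        rw [hq0 s, ← hV0] at this
        simp at this
      rw [this]
      simpa using hδ.le
    · -- V > 0
      have hδM : 0 < δ * (M:ℝ) := by positivity
      have hτpos : 0 < V / (δ * M) := by positivity
      have hcardB : (B.card : ℝ) ≤ δ * (X.card:ℝ)^M := by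
        have heq : (X.card:ℝ)^M * V / M / (V / (δ * M)) = δ * (X.card:ℝ)^M := by
          field_simp
        rw [← heq, le_div_iff₀ hτpos]
        exact hBq
      calc (B.card : ℝ) * p ≤ δ * (X.card:ℝ)^M * p :=
            mul_le_mul_of_nonneg_right hcardB hppos.le
        _ = δ * ((X.card:ℝ)^M * p) := by ring
        _ = δ := by rw [hpn, mul_one]
  linarith [hsplit, hBsum]
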